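/- For any partition λ = (λ₁, λ₂, …, λ_ℓ), applying the Bernstein operators in sequence yields the Schur function: B_{λ₁} B_{λ₂} ⋯ B_{λ_ℓ} · 1 = s_λ. -/

import Mathlib

open scoped Classical

namespace KSchur

noncomputable section

/-! Partitions as weakly decreasing, eventually-zero functions `ℕ → ℕ`
(rows indexed from 0; row 0 is the bottom row, as in the paper). -/

def IsPartitionFun (f : ℕ → ℕ) : Prop :=
  (∀ ⦃i j : ℕ⦄, i ≤ j → f j ≤ f i) ∧ ∃ N, f N = 0

def IsKBounded (k : ℕ) (f : ℕ → ℕ) : Prop := ∀ i, f i ≤ k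

/-- the number of cells of a partition -/
def sizeP (f : ℕ → ℕ) : ℕ := Nat.card {p : ℕ × ℕ | p.2 < f p.1}

/-- column lengths (the conjugate partition) -/
def colLen (f : ℕ → ℕ) (j : ℕ) : ℕ := Nat.card {i : ℕ | j < f i}

/-- hook length of the (0-indexed) cell `(i,j)` -/
def hookLen (f : ℕ → ℕ) (i j : ℕ) : ℕ := (f i - j) + (colLen f j - i) - 1

/-- an `n`-core: no cell has hook length `n` -/
def IsCore (n : ℕ) (f : ℕ → ℕ) : Prop := ∀ i j, j < f i → hookLen f i j ≠ n

/-- the `(k+1)`-residue of the cell `(i,j)` -/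
def resid (k : ℕ) (i j : ℕ) : ZMod (k + 1) := (j : ZMod (k + 1)) - (i : ZMod (k + 1))

def Extremal (f : ℕ → ℕ) (i j : ℕ) : Prop := j < f i ∧ ¬ (j + 1 < f (i + 1))

def Removable (f : ℕ → ℕ) (i j : ℕ) : Prop := j < f i ∧ f i = j + 1 ∧ f (i + 1) ≤ j

def Addable (f : ℕ → ℕ) (i j : ℕ) : Prop := j = f i ∧ (i = 0 ∨ f i < f (i - 1))

/-- the number of `k`-bounded cells (hook length at most `k`) in row `i` -/
def rowCount (k : ℕ) (f : ℕ → ℕ) (i : ℕ) : ℕ :=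
  Nat.card {j : ℕ | j < f i ∧ hookLen f i j ≤ k}

/-- the map `𝔭` from `(k+1)`-cores to `k`-bounded partitions -/
def pmapFun (k : ℕ) (f : ℕ → ℕ) : ℕ → ℕ := rowCount k f

/-- the total number of `k`-bounded cells -/
def kBoundedCount (k : ℕ) (f : ℕ → ℕ) : ℕ :=
  Nat.card {p : ℕ × ℕ | p.2 < f p.1 ∧ hookLen f p.1 p.2 ≤ k}

/-- the map `𝔠`, inverse of `𝔭` -/
def cmap (k : ℕ) (lam : ℕ → ℕ) : ℕ → ℕ :=
  if h : ∃ g, IsPartitionFun g ∧ IsCore (k + 1) g ∧ pmapFun k g = lam then h.choose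
  else fun _ => 0

/-! The action of the affine symmetric group generators `σ_i` on `(k+1)`-cores:
remove all removable corners of residue `i` if there is one, otherwise add all
addable corners of residue `i` if there is one. -/

def RemRowRes (k : ℕ) (f : ℕ → ℕ) (a : ℕ) (i : ZMod (k + 1)) : Prop :=
  0 < f a ∧ f (a + 1) < f a ∧ resid k a (f a - 1) = i

def AddRowRes (k : ℕ) (f : ℕ → ℕ) (a : ℕ) (i : ZMod (k + 1)) : Prop :=
  (a = 0 ∨ f a < f (a - 1)) ∧ resid k a (f a) = i

def coreAct (k : ℕ) (i : ZMod (k + 1)) (f : ℕ → ℕ) : ℕ → ℕ :=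
  if ∃ a, RemRowRes k f a i then fun a => if RemRowRes k f a i then f a - 1 else f a
  else if ∃ a, AddRowRes k f a i then fun a => if AddRowRes k f a i then f a + 1 else f a
  else f

/-- action of a word in the generators (rightmost letter acts first) -/
def wordActZM (k : ℕ) (L : List (ZMod (k + 1))) (f : ℕ → ℕ) : ℕ → ℕ :=
  L.foldr (fun i g => coreAct k i g) f

def wordActZ (k : ℕ) (L : List ℤ) (f : ℕ → ℕ) : ℕ → ℕ :=
  wordActZM k (L.map fun t => ((t : ℤ) : ZMod (k + 1))) f

/-- the word `σ_r σ_{r+1} ⋯ σ_{s-2} σ_{s-1} σ_{s-2} ⋯ σ_{r+1} σ_r` (as a list of integers,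
read left to right) -/
def trsList (r s : ℤ) : List ℤ :=
  ((List.range (s - r).toNat).map fun t => r + t) ++
    (((List.range ((s - r).toNat - 1)).map fun t => r + t).reverse)

/-- action of the transposition `t_{r,s}` on `(k+1)`-cores -/
def trsAct (k : ℕ) (r s : ℤ) (f : ℕ → ℕ) : ℕ → ℕ := wordActZ k (trsList r s) f

/-! `σ_A` for a subset `A ⊆ ℤ_{k+1}`: the product, over the maximal cyclic components
`[a,b]` of `A`, of `σ_b σ_{b-1} ⋯ σ_a`. -/

/-- the length of the maximal cyclic run of `A` starting at `a` -/
def runLen (k : ℕ) (A : Finset (ZMod (k + 1))) (a : ZMod (k + 1)) : ℕ :=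
  if h : ∃ m : ℕ, a + ((m + 1 : ℕ) : ZMod (k + 1)) ∉ A then Nat.find h + 1 else 0

/-- the word `σ_{a+m-1} ⋯ σ_{a+1} σ_a` for the cyclic component of `A` starting at `a` -/
def compWord (k : ℕ) (A : Finset (ZMod (k + 1))) (a : ZMod (k + 1)) : List (ZMod (k + 1)) :=
  ((List.range (runLen k A a)).map fun t => a + (t : ℕ)).reverse

/-- the action of `σ_A` on `(k+1)`-cores (the cyclic components commute; we compose
them in increasing order of the representative of their starting residue) -/
def sigmaSet (k : ℕ) (A : Finset (ZMod (k + 1))) (f : ℕ → ℕ) : ℕ → ℕ :=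
  wordActZM k
    (((((A.filter fun a => a - 1 ∉ A).image fun a => ZMod.val a).sort (· ≤ ·)).map
        fun av => compWord k A ((av : ℕ) : ZMod (k + 1))).flatten) f

/-! Vertical `(k,ℓ)`-strips. -/

/-- `f/g` is a (disjoint) union of horizontal ribbons: no two cells of the skew diagram
are vertically adjacent -/
def HorizRibbons (f g : ℕ → ℕ) : Prop :=
  (∀ a, g a ≤ f a) ∧
    ∀ a b, (g a ≤ b ∧ b < f a) → ¬(g (a + 1) ≤ b ∧ b < f (a + 1))

/-- `g ⋖ f` with `f/g` a union of horizontal ribbons whose lowest component is in row `rr` -/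
def CoverHoriz (k : ℕ) (f g : ℕ → ℕ) (rr : ℕ) : Prop :=
  IsPartitionFun g ∧ IsCore (k + 1) g ∧
    kBoundedCount k f = kBoundedCount k g + 1 ∧ HorizRibbons f g ∧
    g rr < f rr ∧ ∀ a < rr, f a = g a

/-- the number of rows of the main subpartition of `ghat` (relative to `g`) -/
def mainLen (k : ℕ) (g ghat : ℕ → ℕ) : ℕ :=
  Nat.card {a : ℕ | g 0 - rowCount k g 0 < ghat a}

def VertStripChain (k l : ℕ) (g ghat δ : ℕ → ℕ) (w : ℕ → ℕ → ℕ) (r : ℕ → ℕ) : Prop :=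
  w 0 = ghat ∧ w l = δ ∧ (∀ i < l, CoverHoriz k (w i) (w (i + 1)) (r i)) ∧
    (∀ i < l, r i < mainLen k g ghat) ∧
    ∀ i j, i < l → j < l → r i = r j → i = j

/-- `δ` is obtained from `ghat` by removing a vertical `(k,ℓ)`-strip
(`ghat` being the truncated core of the core `g`) -/
def RemVertStrip (k l : ℕ) (g ghat δ : ℕ → ℕ) : Prop :=
  ∃ w r, VertStripChain k l g ghat δ w r

/-- `γ̂` : the core of `𝔭(γ)` with its first part removed -/
def hatCore (k : ℕ) (g : ℕ → ℕ) : ℕ → ℕ := cmap k fun i => rowCount k g (i + 1)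

/-! OX diagrams, the sets `𝒟` and `𝒞`, changeable cells. -/

def DSet (k : ℕ) (lam : ℕ → ℕ) : Set ((ℕ → ℕ) × Finset (ZMod (k + 1))) :=
  {p | ∃ l ≤ k - lam 0,
      RemVertStrip k l (cmap k lam) (hatCore k (cmap k lam)) p.1 ∧
      p.2.card = lam 0 + l ∧ kBoundedCount k (sigmaSet k p.2 p.1) = sizeP lam}

/-- a changeable cell of `(δ, A)`: a cell of `σ_A(δ)` at the top of its column and
belonging to `γ̂` -/
def IsChangeable (k : ℕ) (lam δ : ℕ → ℕ) (A : Finset (ZMod (k + 1))) (c : ℕ × ℕ) : Prop :=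
  c.2 < sigmaSet k A δ c.1 ∧ sigmaSet k A δ (c.1 + 1) ≤ c.2 ∧
    c.2 < hatCore k (cmap k lam) c.1

def CSet (k : ℕ) (lam : ℕ → ℕ) : Set ((ℕ → ℕ) × Finset (ZMod (k + 1))) :=
  {p | p ∈ DSet k lam ∧ ∃ c, IsChangeable k lam p.1 p.2 c}

/-- an O cell of the OX diagram of `(δ, A)`: a cell of `γ̂/δ` -/
def IsOCell (k : ℕ) (lam δ : ℕ → ℕ) (c : ℕ × ℕ) : Prop :=
  δ c.1 ≤ c.2 ∧ c.2 < hatCore k (cmap k lam) c.1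

/-- an OX cell: a cell of `γ̂/δ` that is also a cell of `σ_A(δ)/δ` -/
def IsOXCell (k : ℕ) (lam δ : ℕ → ℕ) (A : Finset (ZMod (k + 1))) (c : ℕ × ℕ) : Prop :=
  δ c.1 ≤ c.2 ∧ c.2 < hatCore k (cmap k lam) c.1 ∧ c.2 < sigmaSet k A δ c.1

/-- the rightmost changeable cell of `(δ, A)` -/
def rcc (k : ℕ) (lam δ : ℕ → ℕ) (A : Finset (ZMod (k + 1))) : ℕ × ℕ :=
  if h : ∃ c, IsChangeable k lam δ A c ∧ ∀ c', IsChangeable k lam δ A c' → c'.2 ≤ c.2 then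
    h.choose
  else (0, 0)

/-- the column of the leftmost OX cell in row `a` -/
def loxCol (k : ℕ) (lam δ : ℕ → ℕ) (A : Finset (ZMod (k + 1))) (a : ℕ) : ℕ :=
  if h : ∃ b, IsOXCell k lam δ A (a, b) then Nat.find h else 0

/-- the column of the leftmost changeable cell `b'` in row `a` all of whose residues
between that of `(a,b')` (inclusive) and that of `(a,b)` (exclusive) lie in `A` -/
def caseIICol (k : ℕ) (lam δ : ℕ → ℕ) (A : Finset (ZMod (k + 1))) (a b : ℕ) : ℕ :=
  if h : ∃ b', IsChangeable k lam δ A (a, b') ∧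
      ∀ t : ℤ, (b' : ℤ) - (a : ℤ) ≤ t → t < (b : ℤ) - (a : ℤ) →
        ((t : ℤ) : ZMod (k + 1)) ∈ A then
    Nat.find h
  else b

/-- the involution `φ` of the paper -/
def phiInv (k : ℕ) (lam : ℕ → ℕ) (p : (ℕ → ℕ) × Finset (ZMod (k + 1))) :
    (ℕ → ℕ) × Finset (ZMod (k + 1)) :=
  let δ := p.1
  let A := p.2
  let c := rcc k lam δ A
  if IsOXCell k lam δ A c then
    (trsAct k ((loxCol k lam δ A c.1 : ℤ) - (c.1 : ℤ)) ((c.2 : ℤ) - (c.1 : ℤ) + 1) δ,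
      A.erase (resid k c.1 c.2))
  else
    (trsAct k ((caseIICol k lam δ A c.1 c.2 : ℤ) - (c.1 : ℤ)) ((c.2 : ℤ) - (c.1 : ℤ) + 1) δ,
      insert (resid k c.1 c.2) A)

/-! Skew diagrams, connectivity, ribbons. -/

def skewSet (g δ : ℕ → ℕ) : Set (ℕ × ℕ) := {p | δ p.1 ≤ p.2 ∧ p.2 < g p.1}

def adjCell (p q : ℕ × ℕ) : Prop :=
  (p.1 = q.1 ∧ (p.2 + 1 = q.2 ∨ q.2 + 1 = p.2)) ∨
    (p.2 = q.2 ∧ (p.1 + 1 = q.1 ∨ q.1 + 1 = p.1))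

def connIn (S : Set (ℕ × ℕ)) (p q : ℕ × ℕ) : Prop :=
  Relation.ReflTransGen (fun x y => adjCell x y ∧ x ∈ S ∧ y ∈ S) p q

/-- the connected component of `p` in `S` -/
def compOf (S : Set (ℕ × ℕ)) (p : ℕ × ℕ) : Set (ℕ × ℕ) := {q | q ∈ S ∧ connIn S p q}

/-- the head (southeast-most cell, i.e. the cell of maximal content) of the
component of `q` -/
def IsHead (S : Set (ℕ × ℕ)) (q : ℕ × ℕ) : Prop :=
  q ∈ S ∧ ∀ p ∈ S, connIn S q p → (p.2 : ℤ) - (p.1 : ℤ) ≤ (q.2 : ℤ) - (q.1 : ℤ)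

/-! A model of the ring of symmetric functions: coefficient functions in the Schur
basis.  `schurB lam` is the Schur function `s_lam`. -/

abbrev SymF := (ℕ → ℕ) → ℤ

def schurB (lam : ℕ → ℕ) : SymF := fun μ => if μ = lam then 1 else 0

/-- the Hall inner product (Schur functions are orthonormal) -/
def hallIP (f g : SymF) : ℤ := ∑ᶠ lam, f lam * g lam

/-- `lam/μ` is a vertical `m`-strip -/
def IsVStrip (μ lam : ℕ → ℕ) (m : ℕ) : Prop :=
  (∀ i, μ i ≤ lam i) ∧ (∀ i, lam i - μ i ≤ 1) ∧ sizeP lam = sizeP μ + m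

/-- `lam/μ` is a horizontal `m`-strip -/
def IsHStrip (μ lam : ℕ → ℕ) (m : ℕ) : Prop :=
  (∀ i, μ i ≤ lam i) ∧ (∀ i, lam (i + 1) ≤ μ i) ∧ sizeP lam = sizeP μ + m

/-- multiplication by the elementary symmetric function `e_m` (Pieri rule) -/
def mulE (m : ℕ) (f : SymF) : SymF := fun μ =>
  if IsPartitionFun μ then ∑ᶠ lam ∈ {lam | IsPartitionFun lam ∧ IsVStrip lam μ m}, f lam
  else 0

/-- multiplication by the complete homogeneous symmetric function `h_m` (Pieri rule) -/
def mulH (m : ℕ) (f : SymF) : SymF := fun μ =>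
  if IsPartitionFun μ then ∑ᶠ lam ∈ {lam | IsPartitionFun lam ∧ IsHStrip lam μ m}, f lam
  else 0

/-- the operator `e_m^⊥` -/
def eperp (m : ℕ) (f : SymF) : SymF := fun μ =>
  if IsPartitionFun μ then ∑ᶠ lam ∈ {lam | IsPartitionFun lam ∧ IsVStrip μ lam m}, f lam
  else 0

/-- the Bernstein operator `B_n = Σ_{i ≥ 0} (-1)^i h_{n+i} e_i^⊥` -/
def Bop (n : ℕ) (f : SymF) : SymF := fun μ =>
  ∑ᶠ i : ℕ, (-1 : ℤ) ^ i * mulH (n + i) (eperp i f) μ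

/-! The affine symmetric group by its Coxeter presentation. -/

def coxRels (k : ℕ) : Set (FreeGroup (ZMod (k + 1))) :=
  {w | (∃ i : ZMod (k + 1), w = FreeGroup.of i * FreeGroup.of i) ∨
    (∃ i : ZMod (k + 1),
      w = FreeGroup.of i * FreeGroup.of (i + 1) * FreeGroup.of i *
        (FreeGroup.of (i + 1) * FreeGroup.of i * FreeGroup.of (i + 1))⁻¹) ∨
    ∃ i j : ZMod (k + 1), i - j ≠ 1 ∧ j - i ≠ 1 ∧
      w = FreeGroup.of i * FreeGroup.of j * (FreeGroup.of j * FreeGroup.of i)⁻¹}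

/-- the generator `σ_t` (for an integer `t`, read modulo `k+1`) -/
def sigmaGen (k : ℕ) (t : ℤ) : PresentedGroup (coxRels k) :=
  PresentedGroup.of ((t : ℤ) : ZMod (k + 1))

/-- the transposition `t_{r,s} = σ_r σ_{r+1} ⋯ σ_{s-2} σ_{s-1} σ_{s-2} ⋯ σ_{r+1} σ_r` -/
def trsElt (k : ℕ) (r s : ℤ) : PresentedGroup (coxRels k) :=
  ((trsList r s).map (sigmaGen k)).prod

/-! The `k`-Schur functions at `t = 1`, via the triangular system defining them in
terms of the complete homogeneous symmetric functions.  We model the ring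
`Λ = ℤ[h₁, h₂, …]` as the polynomial ring `MvPolynomial ℕ ℤ`, `X m` standing for
`h_m`. -/

def hMono (lam : ℕ → ℕ) : MvPolynomial ℕ ℤ :=
  ∏ᶠ i : ℕ, if lam i = 0 then 1 else MvPolynomial.X (lam i)

def numParts (f : ℕ → ℕ) : ℕ := Nat.card {i : ℕ | f i ≠ 0}

/-- `T` is a `k`-tableau of shape the `(k+1)`-core `g` and `k`-weight `α` -/
def IsKTableau (k : ℕ) (g α : ℕ → ℕ) (T : ℕ × ℕ → ℕ) : Prop :=
  (∀ p : ℕ × ℕ, ¬p.2 < g p.1 → T p = 0) ∧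
    (∀ a b, b < g a → 1 ≤ T (a, b) ∧ T (a, b) ≤ numParts α) ∧
    (∀ a b b', b ≤ b' → b' < g a → T (a, b) ≤ T (a, b')) ∧
    (∀ a a' b, a < a' → b < g a' → T (a, b) < T (a', b)) ∧
    ∀ m, 1 ≤ m → m ≤ numParts α →
      Nat.card {ρ : ZMod (k + 1) | ∃ a b, b < g a ∧ T (a, b) = m ∧ resid k a b = ρ} = α (m - 1)

/-- the `k`-Kostka number `K^{(k)}_{μ lam}` -/
def Kcoef (k : ℕ) (μ lam : ℕ → ℕ) : ℕ :=
  Nat.card {x : (ℕ → ℕ) × (ℕ × ℕ → ℕ) //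
    IsPartitionFun x.1 ∧ IsCore (k + 1) x.1 ∧ pmapFun k x.1 = μ ∧ IsKTableau k x.1 lam x.2}

/-- `s` is the family of `k`-Schur functions (at `t = 1`):
`h_lam = Σ_μ K^{(k)}_{μ lam} s_μ` for all `k`-bounded partitions `lam` -/
def IsKSchurFamily (k : ℕ) (s : (ℕ → ℕ) → MvPolynomial ℕ ℤ) : Prop :=
  ∀ lam : ℕ → ℕ, IsPartitionFun lam → IsKBounded k lam →
    hMono lam =
      ∑ᶠ μ ∈ {μ : ℕ → ℕ | IsPartitionFun μ ∧ IsKBounded k μ ∧ sizeP μ = sizeP lam},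
        (Kcoef k μ lam : ℤ) • s μ

/-- the sequences `S = (γ⁽⁰⁾, …, γ⁽ʳ⁾)` of Corollary: encoded as `(r, G, L)` where
`γ⁽ⁱ⁾ = G i` and `ℓ_{i+1} = L i`. -/
def SeqSet (k : ℕ) (g : ℕ → ℕ) : Set (ℕ × (ℕ → ℕ → ℕ) × (ℕ → ℕ)) :=
  {x | x.2.1 0 = (fun _ => 0) ∧ x.2.1 x.1 = g ∧
    (∀ i, x.1 ≤ i → x.2.1 i = g ∧ x.2.2 i = 0) ∧
    ∀ i < x.1,
      IsPartitionFun (x.2.1 (i + 1)) ∧ IsCore (k + 1) (x.2.1 (i + 1)) ∧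
        (∀ a, x.2.1 i a ≤ x.2.1 (i + 1) a) ∧ x.2.1 i ≠ x.2.1 (i + 1) ∧ x.2.2 i ≤ k ∧
        RemVertStrip k (x.2.2 i) (x.2.1 (i + 1)) (hatCore k (x.2.1 (i + 1))) (x.2.1 i)}


/-! ### Auxiliary material for STATEMENT 0 -/

/-- prepend a part to a partition -/
private def consP (n : ℕ) (ν : ℕ → ℕ) : ℕ → ℕ
  | 0 => n
  | j + 1 => ν j

private lemma finsum_mem_if_mem {α : Type*} (T : Set α) (Q : α → Prop) [DecidablePred Q] (F : Finset α)
    (h : ∀ x, (x ∈ T ∧ Q x) ↔ x ∈ F) :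
    (∑ᶠ x ∈ T, (if Q x then (1 : ℤ) else 0)) = F.card := by
  classical
  rw [finsum_mem_def]
  have e : (T.indicator fun x => if Q x then (1 : ℤ) else 0)
      = (↑F : Set α).indicator (fun _ => (1 : ℤ)) := by
    funext x
    by_cases hT : x ∈ T
    · by_cases hQ : Q x
      · have hF : x ∈ F := (h x).1 ⟨hT, hQ⟩
        simp [Set.indicator_apply, hT, hQ, hF]
      · have hF : x ∉ F := fun hF => hQ ((h x).mpr hF).2
        simp [Set.indicator_apply, hT, hQ, hF]
    · have hF : x ∉ F := fun hF => hT ((h x).mpr hF).1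
      simp [Set.indicator_apply, hT, hF]
  rw [e, ← finsum_mem_def, finsum_mem_coe_finset]
  simp

private lemma finsum_mem_if_eq {α : Type*} (T : Set α) (a : α) :
    (∑ᶠ x ∈ T, (if x = a then (1 : ℤ) else 0)) = if a ∈ T then 1 else 0 := by
  classical
  by_cases h : a ∈ T
  · rw [if_pos h, finsum_mem_if_mem T (· = a) {a} ?_]
    · simp
    · intro x
      simp only [Finset.mem_singleton]
      constructor
      · exact fun hx => hx.2
      · rintro rfl; exact ⟨h, rfl⟩
  · rw [if_neg h, finsum_mem_if_mem T (· = a) ∅ ?_]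
    · simp
    · intro x
      simp only [Finset.notMem_empty, iff_false, not_and]
      rintro hx rfl; exact h hx

private lemma sizeP_eq_sum (f : ℕ → ℕ) (N : ℕ) (hf : ∀ i, N ≤ i → f i = 0) :
    sizeP f = ∑ j ∈ Finset.range N, f j := by
  classical
  have hset : {p : ℕ × ℕ | p.2 < f p.1}
      = ↑((Finset.range N).biUnion fun i => ({i} : Finset ℕ) ×ˢ Finset.range (f i)) := by
    ext ⟨a, b⟩
    simp only [Set.mem_setOf_eq, Finset.coe_biUnion, Set.mem_iUnion, Finset.mem_coe,
      Finset.mem_product, Finset.mem_singleton, Finset.mem_range]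
    constructor
    · intro hb
      have ha : a < N := by
        by_contra hge
        rw [hf a (le_of_not_gt hge)] at hb
        omega
      exact ⟨a, ha, rfl, hb⟩
    · rintro ⟨i, _, rfl, hb⟩
      exact hb
  rw [sizeP, hset, Nat.card_coe_set_eq, Set.ncard_coe_finset, Finset.card_biUnion]
  · refine Finset.sum_congr rfl fun i _ => ?_
    simp
  · intro i _ j _ hij
    rw [Function.onFun, Finset.disjoint_left]
    rintro ⟨x, y⟩ hx hy
    simp only [Finset.mem_product, Finset.mem_singleton] at hx hy
    exact hij (hx.1.symm.trans hy.1)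

private lemma isPartitionFun_consP {n : ℕ} {ν : ℕ → ℕ} (hν : IsPartitionFun ν) (hn : ν 0 ≤ n) :
    IsPartitionFun (consP n ν) := by
  obtain ⟨N, hN⟩ := hν.2
  constructor
  · intro i j hij
    match i, j with
    | 0, 0 => exact le_rfl
    | 0, (j + 1) => exact le_trans (hν.1 (Nat.zero_le j)) hn
    | (i + 1), (j + 1) => exact hν.1 (by omega)
    | (i + 1), 0 => omega
  · exact ⟨N + 1, hN⟩

private lemma sizeP_consP (n : ℕ) (ν : ℕ → ℕ) (N : ℕ) (hz : ∀ i, N ≤ i → ν i = 0) :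
    sizeP (consP n ν) = n + sizeP ν := by
  have h1 : ∀ i, N + 1 ≤ i → consP n ν i = 0 := by
    intro i hi
    match i, hi with
    | (j + 1), hi => exact hz j (by omega)
  rw [sizeP_eq_sum ν N hz, sizeP_eq_sum (consP n ν) (N + 1) h1, Finset.sum_range_succ']
  have h2 : ∀ i, consP n ν (i + 1) = ν i := fun _ => rfl
  simp only [h2]
  show (∑ i ∈ Finset.range N, ν i) + n = n + ∑ i ∈ Finset.range N, ν i
  omega

/-- The key step: the Bernstein operator prepends a row to a Schur function. -/
private lemma Bop_schurB (n : ℕ) (ν : ℕ → ℕ) (hν : IsPartitionFun ν) (hn : ν 0 ≤ n) :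
    Bop n (schurB ν) = schurB (consP n ν) := by
  classical
  obtain ⟨N, hN⟩ := hν.2
  have hz : ∀ i, N ≤ i → ν i = 0 := fun i hi => Nat.le_zero.mp (hN ▸ hν.1 hi)
  have hcons : IsPartitionFun (consP n ν) := isPartitionFun_consP hν hn
  have hszc : sizeP (consP n ν) = n + sizeP ν := sizeP_consP n ν N hz
  set base : Finset ℕ := (Finset.range N).filter (fun j => 0 < ν j) with hbase_def
  set lamOf : Finset ℕ → (ℕ → ℕ) := fun S j => if j ∈ S then ν j - 1 else ν j with hlamOf_def
  have hmem_base : ∀ j, j ∈ base ↔ 0 < ν j := by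
    intro j
    rw [hbase_def, Finset.mem_filter, Finset.mem_range]
    constructor
    · exact fun h => h.2
    · intro h
      refine ⟨?_, h⟩
      by_contra hge
      rw [hz j (le_of_not_gt hge)] at h
      omega
  have hlam_le : ∀ S j, lamOf S j ≤ ν j := by
    intro S j
    rw [hlamOf_def]
    dsimp only
    split <;> omega
  have hlam_diff : ∀ S j, ν j - lamOf S j ≤ 1 := by
    intro S j
    rw [hlamOf_def]
    dsimp only
    split <;> omega
  have hlam_in : ∀ (S : Finset ℕ) (j : ℕ), j ∈ S → lamOf S j = ν j - 1 := by
    intro S j hj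
    rw [hlamOf_def]
    simp [hj]
  have hlam_out : ∀ (S : Finset ℕ) (j : ℕ), j ∉ S → lamOf S j = ν j := by
    intro S j hj
    rw [hlamOf_def]
    simp [hj]
  have hsubz : ∀ S : Finset ℕ, ∀ i, N ≤ i → lamOf S i = 0 := by
    intro S i hi
    have := hlam_le S i
    rw [hz i hi] at this
    omega
  have f3 : ∀ S : Finset ℕ, S ⊆ base → sizeP (lamOf S) + S.card = sizeP ν := by
    intro S hS
    rw [sizeP_eq_sum (lamOf S) N (hsubz S), sizeP_eq_sum ν N hz]
    have hScard : ∑ j ∈ Finset.range N, (if j ∈ S then 1 else 0) = S.card := by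
      rw [Finset.sum_ite_mem, Finset.inter_eq_right.mpr
        (hS.trans (by rw [hbase_def]; exact Finset.filter_subset _ _)),
        Finset.sum_const, smul_eq_mul, mul_one]
    rw [← hScard, ← Finset.sum_add_distrib]
    refine Finset.sum_congr rfl fun j _ => ?_
    by_cases hjS : j ∈ S
    · have hpos : 0 < ν j := (hmem_base j).mp (hS hjS)
      rw [hlam_in S j hjS, if_pos hjS]
      omega
    · rw [hlam_out S j hjS, if_neg hjS]
      omega
  funext μ
  by_cases hμ : IsPartitionFun μ
  swap
  · have h1 : Bop n (schurB ν) μ = 0 := by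
      rw [Bop]
      refine finsum_eq_zero_of_forall_eq_zero fun i => ?_
      rw [mulH, if_neg hμ, mul_zero]
    have h2 : schurB (consP n ν) μ = 0 := by
      rw [schurB, if_neg]
      intro he
      exact hμ (he ▸ hcons)
    rw [h1, h2]
  -- μ is a partition
  have heperp : ∀ (i : ℕ) (μ' : ℕ → ℕ), eperp i (schurB ν) μ' =
      if IsPartitionFun μ' ∧ IsVStrip μ' ν i then 1 else 0 := by
    intro i μ'
    rw [eperp]
    by_cases hp : IsPartitionFun μ'
    · rw [if_pos hp]
      simp only [schurB]
      rw [finsum_mem_if_eq]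
      by_cases hv : IsVStrip μ' ν i
      · rw [if_pos (Set.mem_setOf_eq ▸ ⟨hν, hv⟩), if_pos ⟨hp, hv⟩]
      · rw [if_neg, if_neg (fun h => hv h.2)]
        intro h
        exact hv h.2
    · rw [if_neg hp, if_neg (fun h => hp h.1)]
  -- the Finset of admissible subsets for each i
  set A : ℕ → Finset (Finset ℕ) := fun i =>
    base.powerset.filter (fun S => IsHStrip (lamOf S) μ (n + i) ∧ IsVStrip (lamOf S) ν i)
    with hA_def
  have hmulH : ∀ i : ℕ, mulH (n + i) (eperp i (schurB ν)) μ = ((A i).card : ℤ) := by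
    intro i
    rw [mulH, if_pos hμ]
    simp only [heperp i]
    have hinj : Set.InjOn lamOf ↑(A i) := by
      intro S hS S' hS' hEq
      simp only [Finset.coe_filter, Set.mem_setOf_eq, Finset.mem_powerset, hA_def] at hS hS'
      ext j
      constructor
      · intro hjS
        by_contra hjS'
        have h1 := hlam_in S j hjS
        have h2 := hlam_out S' j hjS'
        have hpos : 0 < ν j := (hmem_base j).mp (hS.1 hjS)
        rw [hEq] at h1
        omega
      · intro hjS'
        by_contra hjS
        have h1 := hlam_out S j hjS
        have h2 := hlam_in S' j hjS'
        have hpos : 0 < ν j := (hmem_base j).mp (hS'.1 hjS')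
        rw [hEq] at h1
        omega
    have hcardim : ((A i).image lamOf).card = (A i).card :=
      Finset.card_image_of_injOn hinj
    rw [← hcardim]
    refine finsum_mem_if_mem _ _ _ fun lam => ?_
    simp only [Set.mem_setOf_eq, Finset.mem_image]
    constructor
    · rintro ⟨⟨hpart, hH⟩, -, hV⟩
      refine ⟨base.filter (fun j => lam j ≠ ν j), ?_, ?_⟩
      · have hlamEq : lamOf (base.filter (fun j => lam j ≠ ν j)) = lam := by
          funext j
          by_cases hj : lam j = ν j
          · rw [hlam_out _ j (by simp [Finset.mem_filter, hj]), hj]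
          · have hle : lam j ≤ ν j := hV.1 j
            have hdiff : ν j - lam j ≤ 1 := hV.2.1 j
            have hpos : 0 < ν j := by omega
            rw [hlam_in _ j (by simp [Finset.mem_filter, (hmem_base j).mpr hpos, hj])]
            omega
        rw [hA_def]
        simp only [Finset.mem_filter, Finset.mem_powerset]
        refine ⟨Finset.filter_subset _ _ |>.trans ?_, ?_, ?_⟩
        · exact fun x hx => hx
        · rw [hlamEq]; exact hH
        · rw [hlamEq]; exact hV
      · funext j
        by_cases hj : lam j = ν j
        · rw [hlam_out _ j (by simp [Finset.mem_filter, hj]), hj]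
        · have hle : lam j ≤ ν j := hV.1 j
          have hdiff : ν j - lam j ≤ 1 := hV.2.1 j
          have hpos : 0 < ν j := by omega
          rw [hlam_in _ j (by simp [Finset.mem_filter, (hmem_base j).mpr hpos, hj])]
          omega
    · rintro ⟨S, hS, rfl⟩
      rw [hA_def] at hS
      simp only [Finset.mem_filter, Finset.mem_powerset] at hS
      obtain ⟨hSb, hH, hV⟩ := hS
      have hpart : IsPartitionFun (lamOf S) := by
        refine ⟨fun a b hab => ?_, N, hsubz S N le_rfl⟩
        have hstep : ∀ m, lamOf S (m + 1) ≤ lamOf S m :=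
          fun m => le_trans (hH.1 (m + 1)) (hH.2.1 m)
        exact antitone_nat_of_succ_le hstep hab
      exact ⟨⟨hpart, hH⟩, hpart, hV⟩
  -- rewrite A i using the size conditions
  set B : Finset (Finset ℕ) :=
    base.powerset.filter (fun S => (∀ j, lamOf S j ≤ μ j) ∧ (∀ j, μ (j + 1) ≤ lamOf S j))
    with hB_def
  have hmemB : ∀ S, S ∈ B ↔ S ⊆ base ∧ (∀ j, lamOf S j ≤ μ j) ∧ (∀ j, μ (j + 1) ≤ lamOf S j) := by
    intro S
    rw [hB_def]
    simp [Finset.mem_filter, Finset.mem_powerset, and_assoc]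
  by_cases hsz : sizeP μ = sizeP ν + n
  swap
  · -- sizes don't match : everything is zero
    have hAempty : ∀ i, A i = ∅ := by
      intro i
      rw [hA_def]
      rw [Finset.filter_eq_empty_iff]
      rintro S hS ⟨hH, hV⟩
      rw [Finset.mem_powerset] at hS
      have h3 := f3 S hS
      have h4 := hH.2.2
      have h5 := hV.2.2
      omega
    have h1 : Bop n (schurB ν) μ = 0 := by
      rw [Bop]
      refine finsum_eq_zero_of_forall_eq_zero fun i => ?_
      rw [hmulH i, hAempty i]
      simp
    have h2 : schurB (consP n ν) μ = 0 := by
      rw [schurB, if_neg]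
      intro he
      rw [he] at hsz
      omega
    rw [h1, h2]
  -- sizes match
  have hAi : ∀ i, A i = B.filter (fun S => S.card = i) := by
    intro i
    ext S
    rw [hA_def, Finset.mem_filter]
    simp only [Finset.mem_filter, Finset.mem_powerset, hmemB, IsHStrip, IsVStrip]
    constructor
    · rintro ⟨hSb, ⟨h1, h2, h3⟩, h4, h5, h6⟩
      have h7 := f3 S hSb
      exact ⟨⟨hSb, h1, h2⟩, by omega⟩
    · rintro ⟨⟨hSb, h1, h2⟩, hcard⟩
      have h7 := f3 S hSb
      exact ⟨hSb, ⟨h1, h2, by omega⟩, hlam_le S, hlam_diff S, by omega⟩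
  have hcardbound : ∀ S ∈ B, S.card < N + 1 := by
    intro S hS
    have hSb := ((hmemB S).mp hS).1
    have h1 : S.card ≤ base.card := Finset.card_le_card hSb
    have h2 : base.card ≤ N := by
      rw [hbase_def]
      exact le_trans (Finset.card_filter_le _ _) (by rw [Finset.card_range])
    omega
  have hBop : Bop n (schurB ν) μ = ∑ S ∈ B, (-1 : ℤ) ^ S.card := by
    rw [Bop]
    have hterm : ∀ i : ℕ, (-1 : ℤ) ^ i * mulH (n + i) (eperp i (schurB ν)) μ
        = ∑ S ∈ B.filter (fun S => S.card = i), (-1 : ℤ) ^ S.card := by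
      intro i
      rw [hmulH i, hAi i]
      rw [Finset.sum_congr rfl (fun S hS => by rw [(Finset.mem_filter.mp hS).2])]
      rw [Finset.sum_const, nsmul_eq_mul, mul_comm]
    simp only [hterm]
    rw [finsum_eq_sum_of_support_subset _ (s := Finset.range (N + 1)) ?_]
    · exact Finset.sum_fiberwise_of_maps_to (fun S hS => Finset.mem_range.mpr (hcardbound S hS)) _
    · intro i hi
      simp only [Function.mem_support, ne_eq] at hi
      simp only [Finset.coe_range, Set.mem_Iio]
      by_contra hge
      apply hi
      have : B.filter (fun S => S.card = i) = ∅ := by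
        rw [Finset.filter_eq_empty_iff]
        intro S hS hcard
        have := hcardbound S hS
        omega
      rw [this, Finset.sum_empty]
  rw [hBop, schurB]
  -- now the combinatorial analysis of B
  by_cases hswap : ∃ j0, (0 < ν j0 ∧ μ (j0 + 1) + 1 ≤ ν j0 ∧ ν j0 ≤ μ j0 + 1)
      ∧ (μ (j0 + 1) ≤ ν j0 ∧ ν j0 ≤ μ j0)
  · -- case with a toggleable row : sum is 0 and μ ≠ consP n ν
    obtain ⟨j0, hin, hout⟩ := hswap
    have hne : μ ≠ consP n ν := by
      intro he
      have : μ (j0 + 1) = ν j0 := by rw [he]; rfl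
      omega
    rw [if_neg hne]
    refine Finset.sum_involution
      (fun S _ => if j0 ∈ S then S.erase j0 else insert j0 S) ?_ ?_ ?_ ?_
    · intro S hS
      try dsimp only
      by_cases hj : j0 ∈ S
      · rw [if_pos hj]
        have hc : S.card = (S.erase j0).card + 1 := by
          rw [Finset.card_erase_of_mem hj]
          have := Finset.card_pos.mpr ⟨j0, hj⟩
          omega
        rw [hc, pow_succ]
        ring
      · rw [if_neg hj, Finset.card_insert_of_notMem hj, pow_succ]
        ring
    · intro S hS _
      try dsimp only
      by_cases hj : j0 ∈ S
      · rw [if_pos hj]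
        intro he
        have hne2 := Finset.notMem_erase j0 S
        rw [he] at hne2
        exact hne2 hj
      · rw [if_neg hj]
        intro he
        have hmem2 := Finset.mem_insert_self j0 S
        rw [he] at hmem2
        exact hj hmem2
    · intro S hS
      try dsimp only
      rw [hmemB] at hS
      obtain ⟨hSb, h1, h2⟩ := hS
      by_cases hj : j0 ∈ S
      · rw [if_pos hj, hmemB]
        refine ⟨(Finset.erase_subset j0 S).trans hSb, fun j => ?_, fun j => ?_⟩
        · by_cases hjj : j = j0
          · subst hjj
            rw [hlam_out _ j (Finset.notMem_erase j S)]
            exact hout.2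
          · have heq : lamOf (S.erase j0) j = lamOf S j := by
              by_cases hjS : j ∈ S
              · rw [hlam_in _ j (Finset.mem_erase.mpr ⟨hjj, hjS⟩), hlam_in S j hjS]
              · rw [hlam_out _ j (fun hc => hjS (Finset.mem_erase.mp hc).2), hlam_out S j hjS]
            rw [heq]
            exact h1 j
        · by_cases hjj : j = j0
          · subst hjj
            rw [hlam_out _ j (Finset.notMem_erase j S)]
            exact hout.1
          · have heq : lamOf (S.erase j0) j = lamOf S j := by
              by_cases hjS : j ∈ S
              · rw [hlam_in _ j (Finset.mem_erase.mpr ⟨hjj, hjS⟩), hlam_in S j hjS]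
              · rw [hlam_out _ j (fun hc => hjS (Finset.mem_erase.mp hc).2), hlam_out S j hjS]
            rw [heq]
            exact h2 j
      · rw [if_neg hj, hmemB]
        refine ⟨Finset.insert_subset ((hmem_base j0).mpr hin.1) hSb, fun j => ?_, fun j => ?_⟩
        · by_cases hjj : j = j0
          · subst hjj
            rw [hlam_in _ j (Finset.mem_insert_self j S)]
            omega
          · have heq : lamOf (insert j0 S) j = lamOf S j := by
              by_cases hjS : j ∈ S
              · rw [hlam_in _ j (Finset.mem_insert_of_mem hjS), hlam_in S j hjS]
              · rw [hlam_out _ j (fun hc => ((Finset.mem_insert.mp hc).elim hjj hjS)),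
                  hlam_out S j hjS]
            rw [heq]
            exact h1 j
        · by_cases hjj : j = j0
          · subst hjj
            rw [hlam_in _ j (Finset.mem_insert_self j S)]
            omega
          · have heq : lamOf (insert j0 S) j = lamOf S j := by
              by_cases hjS : j ∈ S
              · rw [hlam_in _ j (Finset.mem_insert_of_mem hjS), hlam_in S j hjS]
              · rw [hlam_out _ j (fun hc => ((Finset.mem_insert.mp hc).elim hjj hjS)),
                  hlam_out S j hjS]
            rw [heq]
            exact h2 j
    · intro S hS
      try dsimp only
      by_cases hj : j0 ∈ S
      · rw [if_pos hj, if_neg (Finset.notMem_erase j0 S), Finset.insert_erase hj]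
      · rw [if_neg hj, if_pos (Finset.mem_insert_self j0 S), Finset.erase_insert hj]
  · -- forced case
    have hnoswap : ∀ j, ¬((0 < ν j ∧ μ (j + 1) + 1 ≤ ν j ∧ ν j ≤ μ j + 1) ∧
        (μ (j + 1) ≤ ν j ∧ ν j ≤ μ j)) := fun j h => hswap ⟨j, h⟩
    set Sstar : Finset ℕ := base.filter (fun j => μ j < ν j) with hSstar_def
    have hSstar_mem : ∀ j, j ∈ Sstar ↔ 0 < ν j ∧ μ j < ν j := by
      intro j
      rw [hSstar_def, Finset.mem_filter, hmem_base]
    have hBsub : ∀ S ∈ B, S = Sstar := by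
      intro S hS
      rw [hmemB] at hS
      obtain ⟨hSb, h1, h2⟩ := hS
      ext j
      rw [hSstar_mem]
      constructor
      · intro hjS
        have hpos : 0 < ν j := (hmem_base j).mp (hSb hjS)
        have ha := h1 j
        have hb := h2 j
        rw [hlam_in S j hjS] at ha hb
        have hokin : 0 < ν j ∧ μ (j + 1) + 1 ≤ ν j ∧ ν j ≤ μ j + 1 := ⟨hpos, by omega, by omega⟩
        refine ⟨hpos, ?_⟩
        by_contra hle
        exact hnoswap j ⟨hokin, by omega, by omega⟩
      · rintro ⟨hpos, hlt⟩
        by_contra hjS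
        have := h1 j
        rw [hlam_out S j hjS] at this
        omega
    rcases Finset.eq_empty_or_nonempty B with hBe | ⟨S0, hS0⟩
    · -- B empty : μ ≠ consP n ν
      have hne : μ ≠ consP n ν := by
        intro he
        have hmem : (∅ : Finset ℕ) ∈ B := by
          rw [hmemB]
          refine ⟨Finset.empty_subset _, fun j => ?_, fun j => ?_⟩
          · rw [hlam_out _ j (Finset.notMem_empty j), he]
            match j with
            | 0 => exact hn
            | (m + 1) => exact hν.1 (Nat.le_succ m)
          · rw [hlam_out _ j (Finset.notMem_empty j), he]
            exact le_rfl
        rw [hBe] at hmem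
        exact Finset.notMem_empty _ hmem
      rw [hBe, Finset.sum_empty, if_neg hne]
    · have hS0star : S0 = Sstar := hBsub S0 hS0
      have hSstarB : Sstar ∈ B := hS0star ▸ hS0
      have hBone : B = {Sstar} := by
        ext S
        rw [Finset.mem_singleton]
        constructor
        · exact hBsub S
        · rintro rfl; exact hSstarB
      rw [hmemB] at hSstarB
      obtain ⟨hSb, h1, h2⟩ := hSstarB
      -- first show Sstar = ∅
      have hSempty : Sstar = ∅ := by
        by_contra hne
        obtain ⟨j, hj⟩ := Finset.nonempty_of_ne_empty hne
        -- downward propagation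
        have hdown : ∀ m, m + 1 ∈ Sstar → m ∈ Sstar := by
          intro m hm1
          rw [hSstar_mem] at hm1
          obtain ⟨hpos1, hlt1⟩ := hm1
          by_contra hmS
          have ha := h1 m
          have hb := h2 m
          rw [hlam_out Sstar m hmS] at ha hb
          have hmono : ν (m + 1) ≤ ν m := hν.1 (Nat.le_succ m)
          have hokin : 0 < ν m ∧ μ (m + 1) + 1 ≤ ν m ∧ ν m ≤ μ m + 1 :=
            ⟨by omega, by omega, by omega⟩
          exact hnoswap m ⟨hokin, by omega, by omega⟩
        have hzero : ∀ m, m ∈ Sstar → 0 ∈ Sstar := by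
          intro m
          induction m with
          | zero => exact fun h => h
          | succ m ih => exact fun h => ih (hdown m h)
        have h0 : 0 ∈ Sstar := hzero j hj
        rw [hSstar_mem] at h0
        obtain ⟨hpos0, hlt0⟩ := h0
        -- size contradiction
        have hμz : ∀ i, N + 1 ≤ i → μ i = 0 := by
          intro i hi
          match i, hi with
          | (m + 1), hi =>
            have hb := h2 m
            have hl := hlam_le Sstar m
            have : ν m = 0 := hz m (by omega)
            omega
        have hμsum : sizeP μ = μ 0 + ∑ m ∈ Finset.range N, μ (m + 1) := by
          rw [sizeP_eq_sum μ (N + 1) hμz, Finset.sum_range_succ']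
          omega
        have hle2 : ∀ m ∈ Finset.range N, μ (m + 1) ≤ ν m := by
          intro m _
          have hb := h2 m
          have hl := hlam_le Sstar m
          omega
        have hsum2 : ∑ m ∈ Finset.range N, μ (m + 1) ≤ ∑ m ∈ Finset.range N, ν m :=
          Finset.sum_le_sum hle2
        have hν0 : sizeP ν = ∑ m ∈ Finset.range N, ν m := sizeP_eq_sum ν N hz
        have hμ0 : μ 0 < n := by
          have hzz := hzero j hj
          have ha := h1 0
          rw [hlam_in Sstar 0 (hzero j hj)] at ha
          -- μ 0 < ν 0 and ν 0 - 1 ≤ μ 0, ν 0 ≤ n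
          omega
        omega
      -- now Sstar = ∅ : show μ = consP n ν
      have h1' : ∀ j, ν j ≤ μ j := by
        intro j
        have := h1 j
        rw [hSempty, hlam_out _ j (Finset.notMem_empty j)] at this
        exact this
      have h2' : ∀ j, μ (j + 1) ≤ ν j := by
        intro j
        have := h2 j
        rw [hSempty, hlam_out _ j (Finset.notMem_empty j)] at this
        exact this
      have hforce : ∀ j, μ (j + 1) = ν j := by
        intro j
        by_cases hpos : 0 < ν j
        · by_contra hne2
          have hlt : μ (j + 1) + 1 ≤ ν j := by
            have := h2' j
            omega
          exact hnoswap j ⟨⟨hpos, hlt, by have := h1' j; omega⟩, h2' j, h1' j⟩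
        · have := h2' j
          omega
      have hμ0 : μ 0 = n := by
        have hμz : ∀ i, N + 1 ≤ i → μ i = 0 := by
          intro i hi
          match i, hi with
          | (m + 1), hi => rw [hforce m]; exact hz m (by omega)
        have hμsum : sizeP μ = μ 0 + ∑ m ∈ Finset.range N, μ (m + 1) := by
          rw [sizeP_eq_sum μ (N + 1) hμz, Finset.sum_range_succ']
          omega
        have heq : ∑ m ∈ Finset.range N, μ (m + 1) = ∑ m ∈ Finset.range N, ν m :=
          Finset.sum_congr rfl fun m _ => hforce m
        have hν0 : sizeP ν = ∑ m ∈ Finset.range N, ν m := sizeP_eq_sum ν N hz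
        omega
      have hμeq : μ = consP n ν := by
        funext i
        cases i with
        | zero => exact hμ0
        | succ m => exact hforce m
      rw [if_pos hμeq, hBone, hSempty, Finset.sum_singleton, Finset.card_empty, pow_zero]

/-- `B_{λ₁} B_{λ₂} ⋯ B_{λ_ℓ} · 1 = s_λ`. -/
theorem bernstein_build_schur (lam : ℕ → ℕ) (hlam : IsPartitionFun lam)
    (l : ℕ) (hl : ∀ i, l ≤ i → lam i = 0) :
    (List.range l).foldr (fun i acc => Bop (lam i) acc) (schurB fun _ => 0) = schurB lam := by
  induction l generalizing lam with
  | zero =>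
    have : lam = fun _ => 0 := funext fun i => hl i (Nat.zero_le i)
    rw [this]
    rfl
  | succ l ih =>
    have hlam' : IsPartitionFun (fun i => lam (i + 1)) :=
      ⟨fun i j hij => hlam.1 (by omega), l, hl (l + 1) (by omega)⟩
    have hl' : ∀ i, l ≤ i → lam (i + 1) = 0 := fun i hi => hl (i + 1) (by omega)
    have hfold := ih (fun i => lam (i + 1)) hlam' hl'
    calc (List.range (l + 1)).foldr (fun i acc => Bop (lam i) acc) (schurB fun _ => 0)
        = Bop (lam 0)
            ((List.range l).foldr (fun i acc => Bop (lam (i + 1)) acc) (schurB fun _ => 0)) := by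
          rw [List.range_succ_eq_map, List.foldr_cons, List.foldr_map]
      _ = Bop (lam 0) (schurB fun i => lam (i + 1)) := by rw [hfold]
      _ = schurB lam := by
          rw [Bop_schurB (lam 0) _ hlam' (hlam.1 (Nat.zero_le 1))]
          have hc : consP (lam 0) (fun i => lam (i + 1)) = lam := by
            funext i
            cases i with
            | zero => rfl
            | succ m => rfl
          rw [hc]

end

end KSchur
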